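/- Let K be a bounded convex set in ℝ^n with nonempty interior, 0 < k < n an integer, and suppose that for every subset I ⊆ {1,...,n} with #I ≤ n - k one has vol_{#I}(P_I K) ≤ (1/a)^{n - #I} · vol_n(K/4), where a > 0. Then there exists a subset J ⊆ {1,...,n} with #J ≥ n - k that is a-shattered by K, i.e. v(K, a) ≥ n - k. -/

import Mathlib

open MeasureTheory
open scoped ENNReal

/-- The coordinate projection of `K ⊆ ℝ^n` onto the coordinates in `I`. -/
def projSet {n : ℕ} (K : Set (Fin n → ℝ)) (I : Finset (Fin n)) :
    Set ({i // i ∈ I} → ℝ) :=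
  {z | ∃ x ∈ K, ∀ i : {i // i ∈ I}, x i.1 = z i}

/-- `J` is `t`-shattered by `K ⊆ ℝ^n`: there is a level function `h` such
that for every partition of `J` into `S` and `J \ S` some `x ∈ K` satisfies
`x i ≥ h i + t` on `S` and `x i ≤ h i` on `J \ S`. -/
def TShattered {n : ℕ} (K : Set (Fin n → ℝ)) (J : Finset (Fin n)) (t : ℝ) : Prop :=
  ∃ h : Fin n → ℝ, ∀ S ⊆ J, ∃ x ∈ K,
    (∀ i ∈ S, h i + t ≤ x i) ∧ (∀ i ∈ J \ S, x i ≤ h i)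


/-- Integer shattering of the coordinate set `I` at levels `h` by a finite set `A ⊆ ℤ^n`. -/
def IntSh {n : ℕ} (A : Finset (Fin n → ℤ)) (I : Finset (Fin n)) (h : Fin n → ℤ) : Prop :=
  ∀ S ⊆ I, ∃ x ∈ A, (∀ i ∈ S, h i + 1 ≤ x i) ∧ (∀ i ∈ I \ S, x i ≤ h i)

/-- The set of shattered pairs `(I, h)` with `h` supported on `I`. -/
def ShPairs {n : ℕ} (A : Finset (Fin n → ℤ)) : Set (Finset (Fin n) × (Fin n → ℤ)) :=
  {p | (∀ i ∉ p.1, p.2 i = 0) ∧ IntSh A p.1 p.2}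

lemma IntSh.nonempty {n : ℕ} {A : Finset (Fin n → ℤ)} {I h} (H : IntSh A I h) :
    A.Nonempty := by
  obtain ⟨x, hx, -⟩ := H ∅ (Finset.empty_subset I)
  exact ⟨x, hx⟩

lemma IntSh.mono {n : ℕ} {A B : Finset (Fin n → ℤ)} {I h} (hAB : A ⊆ B)
    (H : IntSh A I h) : IntSh B I h := by
  intro S hS
  obtain ⟨x, hx, h1, h2⟩ := H S hS
  exact ⟨x, hAB hx, h1, h2⟩

lemma shPairs_finite {n : ℕ} (A : Finset (Fin n → ℤ)) : (ShPairs A).Finite := by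
  classical
  rcases A.eq_empty_or_nonempty with rfl | hA
  · have : ShPairs (∅ : Finset (Fin n → ℤ)) = ∅ := by
      ext p
      simp only [ShPairs, Set.mem_setOf_eq, Set.mem_empty_iff_false, iff_false, not_and]
      intro _ H
      exact absurd H.nonempty (by simp)
    rw [this]; exact Set.finite_empty
  · set C : Finset ℤ := insert 0 (A.biUnion fun x => Finset.image x Finset.univ) with hC
    have h0 : (0 : ℤ) ∈ C := Finset.mem_insert_self _ _
    set L := C.min' ⟨0, h0⟩
    set U := C.max' ⟨0, h0⟩
    have hmem : ∀ x ∈ A, ∀ i, x i ∈ C := by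
      intro x hx i
      exact Finset.mem_insert_of_mem (Finset.mem_biUnion.2 ⟨x, hx, Finset.mem_image_of_mem _ (Finset.mem_univ i)⟩)
    apply Set.Finite.subset
      (Finset.finite_toSet ((Finset.univ : Finset (Finset (Fin n))) ×ˢ
        Fintype.piFinset fun _ => Finset.Icc L U))
    rintro ⟨I, h⟩ ⟨hsupp, H⟩
    simp only [Finset.coe_mem, Finset.mem_coe, Finset.mem_product, Finset.mem_univ, true_and,
      Fintype.mem_piFinset, Finset.mem_Icc]
    intro i
    by_cases hi : i ∈ I
    · obtain ⟨x, hx, h1, -⟩ := H I Finset.Subset.rfl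
      obtain ⟨x', hx', -, h2⟩ := H ∅ (Finset.empty_subset I)
      have hx'i : x' i ≤ h i := h2 i (by simpa using hi)
      have hxi : h i + 1 ≤ x i := h1 i hi
      have hxU : x i ≤ U := Finset.le_max' _ _ (hmem x hx i)
      have hxL : L ≤ x' i := Finset.min'_le _ _ (hmem x' hx' i)
      omega
    · have hz : h i = 0 := hsupp i hi
      constructor
      · rw [hz]; exact Finset.min'_le _ _ h0
      · rw [hz]; exact Finset.le_max' _ _ h0

lemma pajor_aux {n : ℕ} (J : Finset (Fin n)) :
    ∀ A : Finset (Fin n → ℤ), (∀ x ∈ A, ∀ y ∈ A, ∀ i, i ∉ J → x i = y i) →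
      A.card ≤ (shPairs_finite A).toFinset.card := by
  classical
  induction J using Finset.induction_on with
  | empty =>
    intro A hconst
    rcases A.eq_empty_or_nonempty with rfl | hA
    · simp
    · have h1 : A.card ≤ 1 := Finset.card_le_one.2 (by
        intro x hx y hy
        funext i
        exact hconst x hx y hy i (Finset.notMem_empty i))
      have h2 : ((∅ : Finset (Fin n)), (0 : Fin n → ℤ)) ∈ ShPairs A := by
        refine ⟨fun i _ => rfl, fun S hS => ?_⟩
        obtain ⟨x, hx⟩ := hA
        exact ⟨x, hx, by simp [Finset.subset_empty.1 hS], by simp⟩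
      have : 0 < (shPairs_finite A).toFinset.card :=
        Finset.card_pos.2 ⟨_, (shPairs_finite A).mem_toFinset.2 h2⟩
      omega
  | @insert j J' hjJ ih =>
    intro A hconst
    set Av : ℤ → Finset (Fin n → ℤ) := fun v => A.filter (fun x => x j = v) with hAv
    set Vs : Finset ℤ := A.image (fun x => x j) with hVs
    have hcard : A.card = ∑ v ∈ Vs, (Av v).card :=
      Finset.card_eq_sum_card_fiberwise (fun x hx => Finset.mem_image_of_mem _ hx)
    have hih : ∀ v, (Av v).card ≤ (shPairs_finite (Av v)).toFinset.card := by
      intro v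
      apply ih
      intro x hx y hy i hi
      rcases eq_or_ne i j with rfl | hij
      · rw [(Finset.mem_filter.1 hx).2, (Finset.mem_filter.1 hy).2]
      · exact hconst x (Finset.mem_filter.1 hx).1 y (Finset.mem_filter.1 hy).1 i
          (by simp [Finset.mem_insert, hij, hi])
    -- key: no pair of `Av v` uses coordinate `j`
    have hnoj : ∀ v, ∀ p ∈ ShPairs (Av v), j ∉ p.1 := by
      rintro v ⟨I, h⟩ ⟨hsupp, H⟩ hjI
      obtain ⟨x, hx, h1, -⟩ := H {j} (Finset.singleton_subset_iff.2 hjI)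
      obtain ⟨x', hx', -, h2⟩ := H ∅ (Finset.empty_subset I)
      have e1 : x j = v := (Finset.mem_filter.1 hx).2
      have e2 : x' j = v := (Finset.mem_filter.1 hx').2
      have := h1 j (Finset.mem_singleton_self j)
      have := h2 j (by simpa using hjI)
      omega
    -- the injection
    set W : Finset (Fin n) × (Fin n → ℤ) → Finset ℤ :=
      fun p => Vs.filter (fun w => p ∈ ShPairs (Av w)) with hW
    set Φ : ((_ : ℤ) × (Finset (Fin n) × (Fin n → ℤ))) → Finset (Fin n) × (Fin n → ℤ) :=
      fun q => if (q.1 : WithBot ℤ) = (W q.2).max then q.2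
        else (insert j q.2.1, Function.update q.2.2 j q.1) with hΦ
    have hsub : ∀ v, Av v ⊆ A := fun v => Finset.filter_subset _ _
    have hmemW : ∀ v ∈ Vs, ∀ p ∈ ShPairs (Av v), v ∈ W p := by
      intro v hv p hp
      exact Finset.mem_filter.2 ⟨hv, hp⟩
    have key : ∑ v ∈ Vs, (shPairs_finite (Av v)).toFinset.card ≤
        (shPairs_finite A).toFinset.card := by
      rw [← Finset.card_sigma]
      apply Finset.card_le_card_of_injOn Φ
      · -- maps into ShPairs A
        rintro ⟨v, I, h⟩ hq
        simp only [Finset.mem_sigma, Set.Finite.mem_toFinset, Finset.mem_coe] at hq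
        obtain ⟨hv, hp⟩ := hq
        have hjI : j ∉ I := hnoj v (I, h) hp
        obtain ⟨hsupp, H⟩ := hp
        rw [Finset.mem_coe, Set.Finite.mem_toFinset]
        by_cases hmax : ((v : WithBot ℤ) = (W (I, h)).max)
        · simp only [hΦ, hmax, if_pos]
          exact ⟨hsupp, H.mono (hsub v)⟩
        · simp only [hΦ, hmax, if_neg, not_false_iff]
          have hvW : v ∈ W (I, h) := hmemW v hv (I, h) ⟨hsupp, H⟩
          have hne : (W (I, h)).Nonempty := ⟨v, hvW⟩
          set m := (W (I, h)).max' hne with hm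
          have hmmax : ((W (I, h)).max) = (m : WithBot ℤ) := (Finset.coe_max' hne).symm
          have hvm : v ≤ m := Finset.le_max' _ _ hvW
          have hvnem : v ≠ m := by
            intro hvm'; apply hmax; rw [hmmax, hvm']
          have hvltm : v < m := lt_of_le_of_ne hvm hvnem
          have hmW : m ∈ W (I, h) := Finset.max'_mem _ hne
          have Hm : IntSh (Av m) I h := (Finset.mem_filter.1 hmW).2.2
          constructor
          · intro i hi
            dsimp only at hi ⊢
            have hij : i ≠ j := fun e => hi (e ▸ Finset.mem_insert_self j I)
            rw [Function.update_of_ne hij]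
            exact hsupp i (fun hiI => hi (Finset.mem_insert_of_mem hiI))
          · intro S hS
            dsimp only at hS ⊢
            by_cases hjS : j ∈ S
            · obtain ⟨x, hx, h1, h2⟩ := Hm (S.erase j) (by
                intro i hi
                have := hS (Finset.mem_of_mem_erase hi)
                rcases Finset.mem_insert.1 this with rfl | hiI
                · exact absurd rfl (Finset.ne_of_mem_erase hi)
                · exact hiI)
              have exj : x j = m := (Finset.mem_filter.1 hx).2
              refine ⟨x, hsub m hx, ?_, ?_⟩
              · intro i hi
                show Function.update h j v i + 1 ≤ x i
                rcases eq_or_ne i j with rfl | hij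
                · rw [Function.update_self, exj]; omega
                · rw [Function.update_of_ne hij]
                  exact h1 i (Finset.mem_erase.2 ⟨hij, hi⟩)
              · intro i hi
                show x i ≤ Function.update h j v i
                obtain ⟨hi', hiS⟩ := Finset.mem_sdiff.1 hi
                have hij : i ≠ j := fun e => hiS (e ▸ hjS)
                rw [Function.update_of_ne hij]
                refine h2 i (Finset.mem_sdiff.2 ⟨?_, ?_⟩)
                · rcases Finset.mem_insert.1 hi' with rfl | hiI
                  · exact absurd rfl hij
                  · exact hiI
                · intro hiE; exact hiS (Finset.mem_of_mem_erase hiE)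
            · have hSI : S ⊆ I := by
                intro i hi
                rcases Finset.mem_insert.1 (hS hi) with rfl | hiI
                · exact absurd hi hjS
                · exact hiI
              obtain ⟨x, hx, h1, h2⟩ := H S hSI
              have exj : x j = v := (Finset.mem_filter.1 hx).2
              refine ⟨x, hsub v hx, ?_, ?_⟩
              · intro i hi
                show Function.update h j v i + 1 ≤ x i
                have hij : i ≠ j := fun e => hjS (e ▸ hi)
                rw [Function.update_of_ne hij]
                exact h1 i hi
              · intro i hi
                show x i ≤ Function.update h j v i
                obtain ⟨hi', hiS⟩ := Finset.mem_sdiff.1 hi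
                rcases eq_or_ne i j with rfl | hij
                · rw [Function.update_self, exj]
                · rw [Function.update_of_ne hij]
                  refine h2 i (Finset.mem_sdiff.2 ⟨?_, hiS⟩)
                  rcases Finset.mem_insert.1 hi' with rfl | hiI
                  · exact absurd rfl hij
                  · exact hiI
      · -- injectivity
        rintro ⟨v, I, h⟩ hq ⟨v', I', h'⟩ hq' heq
        simp only [Finset.mem_sigma, Set.Finite.mem_toFinset, Finset.mem_coe] at hq hq'
        obtain ⟨hv, hp⟩ := hq
        obtain ⟨hv', hp'⟩ := hq'
        have hjI : j ∉ I := hnoj v (I, h) hp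
        have hjI' : j ∉ I' := hnoj v' (I', h') hp'
        by_cases hmax : ((v : WithBot ℤ) = (W (I, h)).max) <;>
          by_cases hmax' : ((v' : WithBot ℤ) = (W (I', h')).max)
        · simp only [hΦ, hmax, hmax', if_pos] at heq
          have hIh : I = I' ∧ h = h' := by
            have := heq; exact ⟨congrArg Prod.fst this, congrArg Prod.snd this⟩
          obtain ⟨rfl, rfl⟩ : (I, h) = (I', h') := heq
          have : (v : WithBot ℤ) = (v' : WithBot ℤ) := by rw [hmax, hmax']
          have : v = v' := by exact_mod_cast this
          subst this
          rfl
        · exfalso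
          simp only [hΦ, hmax, hmax', if_pos, if_neg, not_false_iff] at heq
          have : j ∈ I := by
            have : I = insert j I' := congrArg Prod.fst heq
            rw [this]; exact Finset.mem_insert_self j I'
          exact hjI this
        · exfalso
          simp only [hΦ, hmax, hmax', if_pos, if_neg, not_false_iff] at heq
          have : j ∈ I' := by
            have : insert j I = I' := congrArg Prod.fst heq
            rw [← this]; exact Finset.mem_insert_self j I
          exact hjI' this
        · simp only [hΦ, hmax, hmax', if_neg, not_false_iff] at heq
          have hI : insert j I = insert j I' := congrArg Prod.fst heq
          have hupd : Function.update h j v = Function.update h' j v' :=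
            congrArg Prod.snd heq
          have hII' : I = I' := by
            have e1 : (insert j I).erase j = I := Finset.erase_insert hjI
            have e2 : (insert j I').erase j = I' := Finset.erase_insert hjI'
            rw [← e1, ← e2, hI]
          have hvv' : v = v' := by
            have := congrFun hupd j
            simpa using this
          have hhh' : h = h' := by
            funext i
            rcases eq_or_ne i j with rfl | hij
            · have e1 : h i = 0 := hp.1 i hjI
              have e2 : h' i = 0 := hp'.1 i hjI'
              rw [e1, e2]
            · have := congrFun hupd i
              rwa [Function.update_of_ne hij, Function.update_of_ne hij] at this
          subst hII'; subst hvv'; subst hhh'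
          rfl
    calc A.card = ∑ v ∈ Vs, (Av v).card := hcard
      _ ≤ ∑ v ∈ Vs, (shPairs_finite (Av v)).toFinset.card := Finset.sum_le_sum fun v _ => hih v
      _ ≤ _ := key

lemma pajor {n : ℕ} (A : Finset (Fin n → ℤ)) :
    A.card ≤ (shPairs_finite A).toFinset.card :=
  pajor_aux Finset.univ A (fun x _ y _ i hi => absurd (Finset.mem_univ i) hi)


/-- Decomposition of a continuous linear functional on a finite product of lines. -/
lemma clm_eq_sum {α : Type*} [Fintype α] [DecidableEq α] (f : (α → ℝ) →L[ℝ] ℝ) (v : α → ℝ) :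
    f v = ∑ i, v i * f (Pi.single i (1:ℝ)) := by
  conv_lhs => rw [← Finset.univ_sum_single v, map_sum]
  refine Finset.sum_congr rfl fun i _ => ?_
  have h1 : (Pi.single i (v i) : α → ℝ) = v i • (Pi.single i (1:ℝ) : α → ℝ) := by
    rw [← Pi.single_smul, smul_eq_mul, mul_one]
  rw [h1, ContinuousLinearMap.map_smul, smul_eq_mul]

/-- The cube lemma: if for every subset `S` of coordinates there is a point of the
convex set `P` which is `≥ h i + a` on `S` and `≤ h i` off `S`, then `P` contains the
cube `∏ [h i, h i + a]`. -/
lemma cube_subset_convex {α : Type*} [Fintype α] [DecidableEq α]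
    {P : Set (α → ℝ)} (hP : Convex ℝ P) {h : α → ℝ} {a : ℝ} (ha : 0 < a)
    (H : ∀ S : Finset α, ∃ y ∈ P, (∀ i ∈ S, h i + a ≤ y i) ∧ (∀ i ∉ S, y i ≤ h i)) :
    (Set.univ.pi fun i => Set.Icc (h i) (h i + a)) ⊆ P := by
  classical
  choose y hyP hy1 hy2 using H
  intro z hz
  simp only [Set.mem_pi, Set.mem_univ, Set.mem_Icc, forall_true_left] at hz
  have hsub : Set.range y ⊆ P := Set.range_subset_iff.2 hyP
  suffices hzc : z ∈ convexHull ℝ (Set.range y) by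
    exact convexHull_min hsub hP hzc
  by_contra hzc
  obtain ⟨f, u, hfu, huz⟩ :=
    _root_.geometric_hahn_banach_closed_point (convex_convexHull ℝ _)
      ((Set.finite_range y).isCompact_convexHull (𝕜 := ℝ)).isClosed hzc
  set w : α → ℝ := fun i => f (Pi.single i (1:ℝ)) with hw
  set S : Finset α := Finset.univ.filter (fun i => 0 < w i) with hS
  have hle : f z ≤ f (y S) := by
    rw [clm_eq_sum, clm_eq_sum]
    refine Finset.sum_le_sum fun i _ => ?_
    by_cases hwi : 0 < w i
    · have hiS : i ∈ S := Finset.mem_filter.2 ⟨Finset.mem_univ i, hwi⟩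
      have : z i ≤ y S i := le_trans (hz i).2 (hy1 S i hiS)
      exact mul_le_mul_of_nonneg_right this hwi.le
    · have hiS : i ∉ S := fun hm => hwi (Finset.mem_filter.1 hm).2
      have : y S i ≤ z i := le_trans (hy2 S i hiS) (hz i).1
      exact mul_le_mul_of_nonpos_right this (not_lt.1 hwi)
  have : f (y S) < u := hfu _ (subset_convexHull ℝ _ ⟨S, rfl⟩)
  linarith

variable {n : ℕ}

/-- The half-open grid cell of mesh `a` indexed by `x ∈ ℤ^n`. -/
def gridCell (a : ℝ) (x : Fin n → ℤ) : Set (Fin n → ℝ) :=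
  Set.univ.pi fun i => Set.Ico (a * x i) (a * x i + a)

lemma mem_gridCell {a : ℝ} {x : Fin n → ℤ} {y : Fin n → ℝ} :
    y ∈ gridCell a x ↔ ∀ i, a * x i ≤ y i ∧ y i < a * x i + a := by
  simp [gridCell, Set.mem_pi]

lemma gridCell_measurable (a : ℝ) (x : Fin n → ℤ) : MeasurableSet (gridCell a x) :=
  MeasurableSet.univ_pi fun i => measurableSet_Ico

lemma gridCell_cover {a : ℝ} (ha : 0 < a) (y : Fin n → ℝ) :
    y ∈ gridCell a (fun i => ⌊y i / a⌋) := by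
  rw [mem_gridCell]
  intro i
  constructor
  · calc a * (⌊y i / a⌋ : ℝ) ≤ a * (y i / a) :=
        mul_le_mul_of_nonneg_left (Int.floor_le _) ha.le
      _ = y i := by field_simp
  · have h1 : y i / a < ⌊y i / a⌋ + 1 := Int.lt_floor_add_one _
    have := mul_lt_mul_of_pos_left h1 ha
    calc y i = a * (y i / a) := by field_simp
      _ < a * ((⌊y i / a⌋ : ℝ) + 1) := mul_lt_mul_of_pos_left h1 ha
      _ = a * ⌊y i / a⌋ + a := by ring
  
lemma gridCell_disjoint {a : ℝ} (ha : 0 < a) {x x' : Fin n → ℤ} (hxx : x ≠ x') :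
    Disjoint (gridCell a x) (gridCell a x') := by
  rw [Set.disjoint_iff_inter_eq_empty]
  by_contra hne
  obtain ⟨y, hy1, hy2⟩ := Set.nonempty_iff_ne_empty.2 hne
  apply hxx
  funext i
  have h1 := mem_gridCell.1 hy1 i
  have h2 := mem_gridCell.1 hy2 i
  have e1 : (x i : ℝ) < x' i + 1 := by
    have : a * x i < a * (x' i + 1) := by nlinarith [h1.1, h2.2]
    exact lt_of_mul_lt_mul_left this ha.le
  have e2 : (x' i : ℝ) < x i + 1 := by
    have : a * x' i < a * (x i + 1) := by nlinarith [h2.1, h1.2]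
    exact lt_of_mul_lt_mul_left this ha.le
  have e1' : x i < x' i + 1 := by exact_mod_cast e1
  have e2' : x' i < x i + 1 := by exact_mod_cast e2
  omega

/-- The basic cell `[0,a)^n`. -/
def gridBox (n : ℕ) (a : ℝ) : Set (Fin n → ℝ) := Set.univ.pi fun _ => Set.Ico 0 a

lemma gridBox_measurable (a : ℝ) : MeasurableSet (gridBox n a) :=
  MeasurableSet.univ_pi fun _ => measurableSet_Ico

lemma gridBox_volume (a : ℝ) : volume (gridBox n a) = ENNReal.ofReal a ^ n := by
  rw [gridBox, volume_pi_pi]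
  simp [Real.volume_Ico]

/-- Averaging the number of lattice points of the translated dilated lattice over
translations in the fundamental cell recovers the volume. -/
lemma lattice_count_integral {a : ℝ} (ha : 0 < a) (Ko : Set (Fin n → ℝ))
    (hKo : MeasurableSet Ko) :
    ∫⁻ t in gridBox n a, ∑' x : Fin n → ℤ,
        Set.indicator Ko (fun _ => (1:ℝ≥0∞)) (fun i => t i + a * x i) = volume Ko := by
  have hmeas : ∀ x : Fin n → ℤ, Measurable fun t : Fin n → ℝ =>
      Set.indicator Ko (fun _ => (1:ℝ≥0∞)) (fun i => t i + a * x i) := by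
    intro x
    have h1 : Measurable fun t : Fin n → ℝ => (fun i => t i + a * x i : Fin n → ℝ) :=
      measurable_pi_lambda _ fun i => (measurable_pi_apply i).add_const _
    exact ((measurable_one.indicator hKo)).comp h1
  rw [lintegral_tsum fun x => (hmeas x).aemeasurable]
  have hterm : ∀ x : Fin n → ℤ,
      (∫⁻ t in gridBox n a,
        Set.indicator Ko (fun _ => (1:ℝ≥0∞)) (fun i => t i + a * x i)) =
      volume (Ko ∩ gridCell a x) := by
    intro x
    set c : Fin n → ℝ := fun i => a * x i with hc
    have hpre : Measurable fun t : Fin n → ℝ => c + t :=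
      (continuous_const.add continuous_id).measurable
    have hrw : ∀ t : Fin n → ℝ, (fun i => t i + a * x i) = c + t := by
      intro t; funext i; simp [hc, add_comm]
    have hindrw : (fun t : Fin n → ℝ =>
        Set.indicator Ko (fun _ => (1:ℝ≥0∞)) (fun i => t i + a * x i)) =
        Set.indicator ((fun t : Fin n → ℝ => c + t) ⁻¹' Ko) (fun _ => (1:ℝ≥0∞)) := by
      funext t
      rw [hrw t]
      by_cases h : c + t ∈ Ko <;> simp [Set.indicator_apply, h, Set.mem_preimage]
    rw [hindrw]
    have hpm : MeasurableSet ((fun t : Fin n → ℝ => c + t) ⁻¹' Ko) := hpre hKo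
    have h1one : (fun _ : Fin n → ℝ => (1:ℝ≥0∞)) = (1 : (Fin n → ℝ) → ℝ≥0∞) := rfl
    rw [h1one, lintegral_indicator_one hpm, Measure.restrict_apply hpm]
    have hset : (fun t : Fin n → ℝ => c + t) ⁻¹' Ko ∩ gridBox n a =
        (fun t : Fin n → ℝ => c + t) ⁻¹' (Ko ∩ gridCell a x) := by
      ext t
      simp only [Set.mem_inter_iff, Set.mem_preimage]
      constructor
      · rintro ⟨h1, h2⟩
        refine ⟨h1, mem_gridCell.2 fun i => ?_⟩
        have := h2 i (Set.mem_univ i)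
        simp only [Set.mem_Ico] at this
        constructor
        · simp only [Pi.add_apply, hc]; linarith [this.1]
        · simp only [Pi.add_apply, hc]; linarith [this.2]
      · rintro ⟨h1, h2⟩
        refine ⟨h1, fun i _ => ?_⟩
        have := mem_gridCell.1 h2 i
        simp only [Pi.add_apply, hc] at this
        simp only [Set.mem_Ico]
        constructor <;> linarith [this.1, this.2]
    rw [hset]
    exact measure_preimage_add volume c _
  calc (∑' x : Fin n → ℤ, ∫⁻ t in gridBox n a,
        Set.indicator Ko (fun _ => (1:ℝ≥0∞)) (fun i => t i + a * x i))
      = ∑' x : Fin n → ℤ, volume (Ko ∩ gridCell a x) := by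
        exact tsum_congr hterm
    _ = volume (⋃ x : Fin n → ℤ, Ko ∩ gridCell a x) := by
        rw [measure_iUnion]
        · intro x x' hxx
          exact Disjoint.mono Set.inter_subset_right Set.inter_subset_right
            (gridCell_disjoint ha hxx)
        · exact fun x => hKo.inter (gridCell_measurable a x)
    _ = volume Ko := by
        congr 1
        apply Set.eq_of_subset_of_subset
        · exact Set.iUnion_subset fun x => Set.inter_subset_left
        · intro y hy
          exact Set.mem_iUnion.2 ⟨fun i => ⌊y i / a⌋, hy, gridCell_cover ha y⟩


/-- `projSet` is the image of `K` under a linear map. -/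
lemma projSet_eq_image {n : ℕ} (K : Set (Fin n → ℝ)) (I : Finset (Fin n)) :
    projSet K I = (LinearMap.funLeft ℝ ℝ (Subtype.val : {i // i ∈ I} → Fin n)) '' K := by
  ext z
  simp only [projSet, Set.mem_setOf_eq, Set.mem_image]
  constructor
  · rintro ⟨x, hx, hxz⟩
    exact ⟨x, hx, funext fun i => hxz i⟩
  · rintro ⟨x, hx, rfl⟩
    exact ⟨x, hx, fun i => rfl⟩

lemma projSet_convex {n : ℕ} {K : Set (Fin n → ℝ)} (hK : Convex ℝ K) (I : Finset (Fin n)) :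
    Convex ℝ (projSet K I) := by
  rw [projSet_eq_image]
  exact hK.linear_image _

/-- **Theorem 3.4 (volume computes the combinatorial dimension).** If `K` is
a bounded convex set with nonempty interior such that every coordinate
projection onto at most `n−k` coordinates satisfies
`vol(P_I K) ≤ (1/a)^{n−#I} vol(K/4)`, then some set of at least `n−k`
coordinates is `a`-shattered by `K`, i.e. `v(K,a) ≥ n−k`. -/
theorem comb_dim_from_volume (n k : ℕ) (hk : 0 < k) (hkn : k < n)
    (K : Set (Fin n → ℝ)) (hconv : Convex ℝ K)
    (hbd : Bornology.IsBounded K) (hint : (interior K).Nonempty)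
    (a : ℝ) (ha : 0 < a)
    (hvol : ∀ I : Finset (Fin n), I.card ≤ n - k →
      (volume (projSet K I)).toReal ≤
        (1 / a) ^ (n - I.card) * ((volume K).toReal / 4 ^ n)) :
    ∃ J : Finset (Fin n), n - k ≤ J.card ∧ TShattered K J a := by
  classical
  by_contra hcon
  push_neg at hcon
  set Ko := interior K with hKodef
  have hKoOpen : IsOpen Ko := isOpen_interior
  have hKoK : Ko ⊆ K := interior_subset
  have hKomeas : MeasurableSet Ko := hKoOpen.measurableSet
  have hvolKo : volume Ko = volume K := by
    refine le_antisymm (measure_mono hKoK) ?_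
    calc volume K ≤ volume (closure K) := measure_mono subset_closure
      _ ≤ volume (Ko ∪ frontier K) := by
          rw [closure_eq_interior_union_frontier]
      _ ≤ volume Ko + volume (frontier K) := measure_union_le _ _
      _ = volume Ko := by rw [hconv.addHaar_frontier volume, add_zero]
  obtain ⟨r₀, hrK₀⟩ : ∃ r, K ⊆ Metric.closedBall 0 r := hbd.subset_closedBall 0
  set r := max r₀ 0 with hrdef
  have hr0 : 0 ≤ r := le_max_right _ _
  have hrK : K ⊆ Metric.closedBall 0 r :=
    hrK₀.trans (Metric.closedBall_subset_closedBall (le_max_left _ _))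
  have hKcoord : ∀ y ∈ K, ∀ i, |y i| ≤ r := by
    intro y hy i
    have h1 : ‖y‖ ≤ r := mem_closedBall_zero_iff.1 (hrK hy)
    calc |y i| = ‖y i‖ := (Real.norm_eq_abs _).symm
      _ ≤ ‖y‖ := norm_le_pi_norm y i
      _ ≤ r := h1
  have hKfin : volume K ≠ ⊤ :=
    ne_top_of_le_ne_top (isCompact_closedBall (0 : Fin n → ℝ) r).measure_lt_top.ne
      (measure_mono hrK)
  have hKpos : volume K ≠ 0 := by
    rw [← hvolKo]
    exact (hKoOpen.measure_pos volume hint).ne'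
  have hprojfin : ∀ I : Finset (Fin n), volume (projSet K I) ≠ ⊤ := by
    intro I
    have hsub : projSet K I ⊆ Metric.closedBall 0 r := by
      rintro z ⟨x, hx, hxz⟩
      rw [mem_closedBall_zero_iff]
      refine (pi_norm_le_iff_of_nonneg hr0).2 fun i => ?_
      rw [← hxz i, Real.norm_eq_abs]
      exact hKcoord x hx i.1
    exact ne_top_of_le_ne_top (isCompact_closedBall 0 r).measure_lt_top.ne
      (measure_mono hsub)
  have hAtfin : ∀ t : Fin n → ℝ, {x : Fin n → ℤ | (fun i => t i + a * x i) ∈ Ko}.Finite := by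
    intro t
    set M : ℤ := ⌈(r + ‖t‖) / a⌉ with hM
    apply Set.Finite.subset
      (Finset.finite_toSet (Fintype.piFinset fun _ : Fin n => Finset.Icc (-M) M))
    intro x hx
    simp only [Set.mem_setOf_eq] at hx
    rw [Finset.mem_coe, Fintype.mem_piFinset]
    intro i
    rw [Finset.mem_Icc]
    have h1 : |t i + a * x i| ≤ r := hKcoord _ (hKoK hx) i
    have h2 : |t i| ≤ ‖t‖ := by rw [← Real.norm_eq_abs]; exact norm_le_pi_norm t i
    have h3 : |a * (x i : ℝ)| ≤ r + ‖t‖ := by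
      obtain ⟨e1, e2⟩ := abs_le.1 h1
      obtain ⟨e3, e4⟩ := abs_le.1 h2
      exact abs_le.2 ⟨by linarith, by linarith⟩
    have h4 : |(x i : ℝ)| ≤ (r + ‖t‖) / a := by
      rw [abs_mul, abs_of_pos ha] at h3
      exact (le_div_iff₀' ha).2 h3
    have h5 : ((r + ‖t‖) / a) ≤ (M : ℝ) := Int.le_ceil _
    obtain ⟨e1, e2⟩ := abs_le.1 h4
    constructor
    · exact_mod_cast le_trans (by linarith : -(M : ℝ) ≤ (x i : ℝ)) (le_refl _)
    · exact_mod_cast le_trans (le_refl ((x i : ℝ))) (by linarith : (x i : ℝ) ≤ (M : ℝ))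
  set Ft : (Fin n → ℝ) → Finset (Fin n → ℤ) := fun t => (hAtfin t).toFinset with hFtdef
  set q : ℝ≥0∞ := ENNReal.ofReal a with hqdef
  have hq0 : q ≠ 0 := by
    simp only [hqdef, ne_eq, ENNReal.ofReal_eq_zero, not_le]
    exact ha
  have hqtop : q ≠ ⊤ := ENNReal.ofReal_ne_top
  set D : Finset (Finset (Fin n)) :=
    Finset.univ.filter (fun I : Finset (Fin n) => I.card < n - k) with hDdef
  set B : ℝ≥0∞ := ∑ I ∈ D, q ^ (n - I.card) * volume (projSet K I) with hBdef
  -- the key pointwise counting bound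
  have key : ∀ t : Fin n → ℝ, ((Ft t).card : ℝ≥0∞) * q ^ n ≤ B := by
    intro t
    set T : Finset (Finset (Fin n) × (Fin n → ℤ)) := (shPairs_finite (Ft t)).toFinset with hT
    have hTmem : ∀ p ∈ T, (∀ i ∉ p.1, p.2 i = 0) ∧ IntSh (Ft t) p.1 p.2 := by
      intro p hp
      exact (Set.Finite.mem_toFinset (shPairs_finite (Ft t))).1 hp
    have hshat : ∀ p ∈ T, TShattered K p.1 a := by
      rintro ⟨I, h⟩ hp
      obtain ⟨hsupp, H⟩ := hTmem _ hp
      refine ⟨fun i => t i + a * h i, fun S hS => ?_⟩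
      obtain ⟨x, hxF, H1, H2⟩ := H S hS
      have hxK : (fun i => t i + a * x i) ∈ K := hKoK ((hAtfin t).mem_toFinset.1 hxF)
      refine ⟨_, hxK, fun i hi => ?_, fun i hi => ?_⟩
      · show (fun i => t i + a * (h i : ℝ)) i + a ≤ t i + a * x i
        have h1 : (h i : ℝ) + 1 ≤ (x i : ℝ) := by exact_mod_cast H1 i hi
        have h2 := mul_le_mul_of_nonneg_left h1 ha.le
        simp only
        nlinarith
      · show t i + a * (x i : ℝ) ≤ (fun i => t i + a * (h i : ℝ)) i
        have h1 : (x i : ℝ) ≤ (h i : ℝ) := by exact_mod_cast H2 i hi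
        have h2 := mul_le_mul_of_nonneg_left h1 ha.le
        simp only
        linarith
    have hsmall : ∀ p ∈ T, p.1.card < n - k := by
      intro p hp
      by_contra hge
      exact hcon p.1 (le_of_not_gt hge) (hshat p hp)
    have hcount : (Ft t).card ≤
        ∑ I ∈ (Finset.univ : Finset (Finset (Fin n))), (T.filter fun p => p.1 = I).card :=
      (pajor (Ft t)).trans_eq (Finset.card_eq_sum_card_fiberwise fun p _ => Finset.mem_univ _)
    have hfiber : ∀ I : Finset (Fin n),
        ((T.filter fun p => p.1 = I).card : ℝ≥0∞) * q ^ I.card ≤ volume (projSet K I) := by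
      intro I
      set HI : Finset (Fin n → ℤ) := (T.filter fun p => p.1 = I).image Prod.snd with hHI
      have hcardHI : (T.filter fun p => p.1 = I).card = HI.card := by
        rw [hHI]
        refine (Finset.card_image_of_injOn ?_).symm
        rintro p hp p' hp' hsnd
        have e1 : p.1 = I := (Finset.mem_filter.1 hp).2
        have e2 : p'.1 = I := (Finset.mem_filter.1 hp').2
        exact Prod.ext (e1.trans e2.symm) hsnd
      have hHImem : ∀ h ∈ HI, (∀ i ∉ I, h i = 0) ∧ IntSh (Ft t) I h := by
        intro h hh
        obtain ⟨p, hp, hps⟩ := Finset.mem_image.1 hh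
        obtain ⟨hpT, hpI⟩ := Finset.mem_filter.1 hp
        obtain ⟨hs1, hs2⟩ := hTmem p hpT
        refine ⟨fun i hi => ?_, ?_⟩
        · rw [← hps]
          exact hs1 i (by rwa [hpI])
        · rw [← hps]
          rwa [hpI] at hs2
      set box : (Fin n → ℤ) → Set ({i // i ∈ I} → ℝ) := fun h =>
        Set.univ.pi fun i => Set.Ico (t i.1 + a * h i.1) (t i.1 + a * h i.1 + a) with hbox
      have hboxmeas : ∀ h, MeasurableSet (box h) :=
        fun h => MeasurableSet.univ_pi fun i => measurableSet_Ico
      have hboxvol : ∀ h, volume (box h) = q ^ I.card := by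
        intro h
        rw [hbox]
        simp only
        rw [volume_pi_pi]
        simp only [Real.volume_Ico, add_sub_cancel_left]
        rw [Finset.prod_const, Finset.card_univ, Fintype.card_coe, hqdef]
      have hboxsub : ∀ h ∈ HI, box h ⊆ projSet K I := by
        intro h hh
        obtain ⟨hsupp, H⟩ := hHImem h hh
        have hsubset : (Set.univ.pi fun i : {i // i ∈ I} =>
            Set.Icc (t i.1 + a * h i.1) (t i.1 + a * h i.1 + a)) ⊆ projSet K I := by
          apply cube_subset_convex (projSet_convex hconv I) ha
          intro S'
          obtain ⟨x, hxF, H1, H2⟩ := H (S'.image Subtype.val) (by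
            intro i hi
            obtain ⟨i', _, rfl⟩ := Finset.mem_image.1 hi
            exact i'.2)
          have hxK : (fun i => t i + a * x i) ∈ K := hKoK ((hAtfin t).mem_toFinset.1 hxF)
          refine ⟨fun i : {i // i ∈ I} => t i.1 + a * x i.1,
            ⟨_, hxK, fun i => rfl⟩, fun i hi => ?_, fun i hi => ?_⟩
          · show t i.1 + a * ((h i.1 : ℤ) : ℝ) + a ≤ t i.1 + a * ((x i.1 : ℤ) : ℝ)
            have h1 : (h i.1 : ℝ) + 1 ≤ x i.1 := by
              exact_mod_cast H1 i.1 (Finset.mem_image_of_mem _ hi)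
            nlinarith [mul_le_mul_of_nonneg_left h1 ha.le]
          · have hiS : i.1 ∈ I \ S'.image Subtype.val := by
              rw [Finset.mem_sdiff]
              refine ⟨i.2, fun hmem => hi ?_⟩
              obtain ⟨i', hi', he⟩ := Finset.mem_image.1 hmem
              rwa [← Subtype.ext he]
            show t i.1 + a * ((x i.1 : ℤ) : ℝ) ≤ t i.1 + a * ((h i.1 : ℤ) : ℝ)
            have h1 : (x i.1 : ℝ) ≤ h i.1 := by exact_mod_cast H2 i.1 hiS
            nlinarith [mul_le_mul_of_nonneg_left h1 ha.le]
        refine subset_trans ?_ hsubset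
        apply Set.pi_mono
        intro i _
        exact Set.Ico_subset_Icc_self
      have hdisj : (HI : Set (Fin n → ℤ)).PairwiseDisjoint box := by
        intro h1 hh1 h2 hh2 hne
        obtain ⟨i, hi⟩ := Function.ne_iff.1 hne
        have hiI : i ∈ I := by
          by_contra hiI
          apply hi
          rw [(hHImem h1 (Finset.mem_coe.1 hh1)).1 i hiI,
            (hHImem h2 (Finset.mem_coe.1 hh2)).1 i hiI]
        simp only [Function.onFun]
        rw [Set.disjoint_left]
        intro z hz1 hz2
        have e1 := Set.mem_univ_pi.1 hz1 ⟨i, hiI⟩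
        have e2 := Set.mem_univ_pi.1 hz2 ⟨i, hiI⟩
        simp only [Set.mem_Ico] at e1 e2
        rcases lt_or_gt_of_ne hi with hlt | hgt
        · have hc : (h1 i : ℝ) + 1 ≤ h2 i := by exact_mod_cast hlt
          nlinarith [mul_le_mul_of_nonneg_left hc ha.le]
        · have hc : (h2 i : ℝ) + 1 ≤ h1 i := by exact_mod_cast hgt
          nlinarith [mul_le_mul_of_nonneg_left hc ha.le]
      calc ((T.filter fun p => p.1 = I).card : ℝ≥0∞) * q ^ I.card
          = ∑ h ∈ HI, volume (box h) := by
            rw [Finset.sum_congr rfl fun h _ => hboxvol h, Finset.sum_const, nsmul_eq_mul,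
              hcardHI]
        _ = volume (⋃ h ∈ HI, box h) :=
            (measure_biUnion_finset hdisj fun h _ => hboxmeas h).symm
        _ ≤ volume (projSet K I) := measure_mono (Set.iUnion₂_subset hboxsub)
    have hTD : ∀ I ∉ D, (T.filter fun p => p.1 = I).card = 0 := by
      intro I hID
      rw [Finset.card_eq_zero, Finset.filter_eq_empty_iff]
      intro p hp hpI
      apply hID
      rw [hDdef, Finset.mem_filter]
      exact ⟨Finset.mem_univ _, hpI ▸ hsmall p hp⟩
    calc ((Ft t).card : ℝ≥0∞) * q ^ n
        ≤ (∑ I ∈ (Finset.univ : Finset (Finset (Fin n))),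
            ((T.filter fun p => p.1 = I).card : ℝ≥0∞)) * q ^ n := by
          apply mul_le_mul_left
          exact_mod_cast hcount
      _ = (∑ I ∈ D, ((T.filter fun p => p.1 = I).card : ℝ≥0∞)) * q ^ n := by
          congr 1
          refine (Finset.sum_subset (Finset.subset_univ D) ?_).symm
          intro I _ hID
          rw [hTD I hID]
          norm_num
      _ = ∑ I ∈ D, ((T.filter fun p => p.1 = I).card : ℝ≥0∞) * q ^ n :=
          Finset.sum_mul _ _ _
      _ ≤ B := by
          rw [hBdef]
          apply Finset.sum_le_sum
          intro I hID
          have hIn : I.card ≤ n := by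
            calc I.card ≤ (Finset.univ : Finset (Fin n)).card := Finset.card_le_univ I
              _ = n := by simp
          have hqsplit : q ^ n = q ^ I.card * q ^ (n - I.card) := by
            rw [← pow_add]
            congr 1
            omega
          rw [hqsplit, ← mul_assoc]
          calc ((T.filter fun p => p.1 = I).card : ℝ≥0∞) * q ^ I.card * q ^ (n - I.card)
              ≤ volume (projSet K I) * q ^ (n - I.card) := mul_le_mul_left (hfiber I) _
            _ = q ^ (n - I.card) * volume (projSet K I) := mul_comm _ _
  -- the integral identity
  have hFeq : ∀ t : Fin n → ℝ,
      (∑' x : Fin n → ℤ, Set.indicator Ko (fun _ => (1 : ℝ≥0∞)) (fun i => t i + a * x i))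
        = ((Ft t).card : ℝ≥0∞) := by
    intro t
    have h0 : ∀ x ∉ Ft t,
        Set.indicator Ko (fun _ => (1 : ℝ≥0∞)) (fun i => t i + a * x i) = 0 := by
      intro x hx
      apply Set.indicator_of_notMem
      simpa [hFtdef, Set.Finite.mem_toFinset] using hx
    rw [tsum_eq_sum h0]
    have h1 : ∀ x ∈ Ft t,
        Set.indicator Ko (fun _ => (1 : ℝ≥0∞)) (fun i => t i + a * x i) = 1 := by
      intro x hx
      apply Set.indicator_of_mem
      simpa [hFtdef, Set.Finite.mem_toFinset] using hx
    rw [Finset.sum_congr rfl h1, Finset.sum_const, nsmul_eq_mul, mul_one]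
  have hmeasF : Measurable fun t : Fin n → ℝ =>
      ∑' x : Fin n → ℤ, Set.indicator Ko (fun _ => (1 : ℝ≥0∞)) (fun i => t i + a * x i) := by
    apply Measurable.ennreal_tsum
    intro x
    have h1 : Measurable fun t : Fin n → ℝ => (fun i => t i + a * x i : Fin n → ℝ) :=
      measurable_pi_lambda _ fun i => (measurable_pi_apply i).add_const _
    exact (measurable_one.indicator hKomeas).comp h1
  have hchain : volume K * q ^ n ≤ B * q ^ n := by
    calc volume K * q ^ n = volume Ko * q ^ n := by rw [hvolKo]
      _ = (∫⁻ t in gridBox n a, ∑' x : Fin n → ℤ,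
            Set.indicator Ko (fun _ => (1 : ℝ≥0∞)) (fun i => t i + a * x i)) * q ^ n := by
          rw [lattice_count_integral ha Ko hKomeas]
      _ = ∫⁻ t in gridBox n a, (∑' x : Fin n → ℤ,
            Set.indicator Ko (fun _ => (1 : ℝ≥0∞)) (fun i => t i + a * x i)) * q ^ n :=
          (lintegral_mul_const _ hmeasF).symm
      _ ≤ ∫⁻ _ in gridBox n a, B := by
          refine lintegral_mono fun t => ?_
          rw [hFeq t]
          exact key t
      _ = B * volume (gridBox n a) := setLIntegral_const _ _
      _ = B * q ^ n := by rw [gridBox_volume, hqdef]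
  have hKB : volume K ≤ B :=
    (ENNReal.mul_le_mul_iff_left (pow_ne_zero _ hq0) (ENNReal.pow_ne_top hqtop)).1 hchain
  set Vr := (volume K).toReal with hVr
  have hVrpos : 0 < Vr := ENNReal.toReal_pos hKpos hKfin
  have hBle : B ≤ ENNReal.ofReal ((2 : ℝ) ^ n * (Vr / 4 ^ n)) := by
    calc B ≤ ∑ I ∈ D, ENNReal.ofReal (Vr / 4 ^ n) := by
            apply Finset.sum_le_sum
            intro I hI
            have hIcard : I.card ≤ n - k := le_of_lt (by
              have := (Finset.mem_filter.1 (hDdef ▸ hI)).2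
              exact this)
            have hv := hvol I hIcard
            have hfin := hprojfin I
            have hle : volume (projSet K I) ≤
                ENNReal.ofReal ((1 / a) ^ (n - I.card) * (Vr / 4 ^ n)) := by
              rw [ENNReal.le_ofReal_iff_toReal_le hfin (by positivity)]
              calc (volume (projSet K I)).toReal
                  ≤ (1 / a) ^ (n - I.card) * ((volume K).toReal / 4 ^ n) := hv
                _ = (1 / a) ^ (n - I.card) * (Vr / 4 ^ n) := by rw [hVr]
            calc q ^ (n - I.card) * volume (projSet K I)
                ≤ q ^ (n - I.card) * ENNReal.ofReal ((1 / a) ^ (n - I.card) * (Vr / 4 ^ n)) :=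
                  mul_le_mul_right hle _
              _ = ENNReal.ofReal (a ^ (n - I.card) * ((1 / a) ^ (n - I.card) * (Vr / 4 ^ n))) := by
                  rw [hqdef, ← ENNReal.ofReal_pow ha.le, ← ENNReal.ofReal_mul (by positivity)]
              _ = ENNReal.ofReal (Vr / 4 ^ n) := by
                  congr 1
                  rw [← mul_assoc, ← mul_pow, mul_one_div_cancel ha.ne', one_pow, one_mul]
      _ = D.card • ENNReal.ofReal (Vr / 4 ^ n) := (Finset.sum_const _)
      _ = (D.card : ℝ≥0∞) * ENNReal.ofReal (Vr / 4 ^ n) := nsmul_eq_mul _ _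
      _ ≤ ((2 ^ n : ℕ) : ℝ≥0∞) * ENNReal.ofReal (Vr / 4 ^ n) := by
          apply mul_le_mul_left
          have h1 : D.card ≤ 2 ^ n := by
            calc D.card ≤ (Finset.univ : Finset (Finset (Fin n))).card :=
                Finset.card_filter_le _ _
              _ = 2 ^ n := by rw [Finset.card_univ, Fintype.card_finset, Fintype.card_fin]
          exact_mod_cast h1
      _ = ENNReal.ofReal ((2 : ℝ) ^ n * (Vr / 4 ^ n)) := by
          rw [ENNReal.ofReal_mul (by positivity)]
          congr 1
          rw [← ENNReal.ofReal_natCast (2 ^ n)]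
          congr 1
          push_cast
          ring
  have hfinal : Vr ≤ 2 ^ n * (Vr / 4 ^ n) :=
    ENNReal.toReal_le_of_le_ofReal (by positivity) (hKB.trans hBle)
  have hn0 : n ≠ 0 := by omega
  have h24 : (2 : ℝ) ^ n < 4 ^ n := by
    apply pow_lt_pow_left₀ (by norm_num) (by norm_num) hn0
  have h4pos : (0 : ℝ) < 4 ^ n := by positivity
  have hmul : Vr * 4 ^ n ≤ 2 ^ n * Vr := by
    have h' : Vr ≤ 2 ^ n * Vr / 4 ^ n := by
      rw [mul_div_assoc]
      exact hfinal
    exact (le_div_iff₀ h4pos).1 h'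
  nlinarith [hmul, h24, hVrpos]
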